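/- Let (X,d) be a metric space homeomorphic to ℝ on which the isometry group acts transitively. Then for any p,q ∈ X there exists a unique orientation-preserving isometry g of X with g(p) = q. -/

import Mathlib

/-- If the conjugate of `h` under `e` is strictly monotone, so is the conjugate of `h.symm`. -/
private lemma conj_inv_mono {X : Type*} [MetricSpace X] (e : X ≃ₜ ℝ) (h : X ≃ᵢ X)
    (hm : StrictMono (fun s : ℝ => e (h (e.symm s)))) :
    StrictMono (fun s : ℝ => e (h.symm (e.symm s))) := by
  intro s1 s2 h12
  have key : (fun s : ℝ => e (h (e.symm s))) ((fun s : ℝ => e (h.symm (e.symm s))) s1) <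
      (fun s : ℝ => e (h (e.symm s))) ((fun s : ℝ => e (h.symm (e.symm s))) s2) := by
    simpa using h12
  exact hm.lt_iff_lt.mp key

/-- If the conjugate of `h` under `e` is strictly antitone, so is the conjugate of `h.symm`. -/
private lemma conj_inv_anti {X : Type*} [MetricSpace X] (e : X ≃ₜ ℝ) (h : X ≃ᵢ X)
    (hm : StrictAnti (fun s : ℝ => e (h (e.symm s)))) :
    StrictAnti (fun s : ℝ => e (h.symm (e.symm s))) := by
  intro s1 s2 h12
  have key : (fun s : ℝ => e (h (e.symm s))) ((fun s : ℝ => e (h.symm (e.symm s))) s1) <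
      (fun s : ℝ => e (h (e.symm s))) ((fun s : ℝ => e (h.symm (e.symm s))) s2) := by
    simpa using h12
  exact hm.lt_iff_gt.mp key

/-- Core lemma: if `h` is an isometry of `X` whose conjugate `H` under `e` is strictly
monotone, `H` fixes `a`, and `t < a` with `t < H t`, we get a contradiction. -/
private lemma core_lemma {X : Type*} [MetricSpace X] (e : X ≃ₜ ℝ) (h : X ≃ᵢ X)
    (hm : StrictMono (fun s : ℝ => e (h (e.symm s)))) (a t : ℝ)
    (ha : e (h (e.symm a)) = a) (hta : t < a) (ht : t < e (h (e.symm t))) : False := by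
  set H : ℝ → ℝ := fun s => e (h (e.symm s)) with hH
  have Hcont : Continuous H := e.continuous.comp (h.continuous.comp e.symm.continuous)
  -- the set of fixed points of H that are ≥ t
  set S : Set ℝ := {s | H s = s ∧ t ≤ s} with hS
  have hSne : S.Nonempty := ⟨a, ha, hta.le⟩
  have hSbdd : BddBelow S := ⟨t, fun s hs => hs.2⟩
  have hSclosed : IsClosed S := by
    have h1 : IsClosed {s : ℝ | H s = s} := isClosed_eq Hcont continuous_id
    have h2 : IsClosed {s : ℝ | t ≤ s} := isClosed_Ici
    exact h1.inter h2
  set c := sInf S with hc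
  have hcS : c ∈ S := hSclosed.csInf_mem hSne hSbdd
  have hcfix : H c = c := hcS.1
  have htcne : t ≠ c := by
    intro heq
    rw [← heq] at hcfix
    exact ht.ne' hcfix
  have htc : t < c := lt_of_le_of_ne hcS.2 htcne
  -- between t and c, H s > s
  have key : ∀ s, t ≤ s → s < c → s < H s := by
    intro s hts hsc
    rcases lt_trichotomy s (H s) with h1 | h1 | h1
    · exact h1
    · exact absurd (hc ▸ csInf_le hSbdd ⟨h1.symm, hts⟩) (not_le.mpr hsc)
    · -- IVT gives a fixed point in [t, s], contradicting minimality of c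
      have hcontOn : ContinuousOn (fun x => H x - x) (Set.Icc t s) :=
        (Hcont.sub continuous_id).continuousOn
      have hmem : (0 : ℝ) ∈ Set.Icc (H s - s) (H t - t) := ⟨by linarith, by linarith⟩
      obtain ⟨x, hx, hx0⟩ := intermediate_value_Icc' hts hcontOn hmem
      have hx0' : H x - x = 0 := hx0
      have hxfix : H x = x := by linarith
      have : c ≤ x := hc ▸ csInf_le hSbdd ⟨hxfix, hx.1⟩
      linarith [hx.2]
  -- the forward orbit of t
  set u : ℕ → ℝ := fun n => H^[n] t with hu
  have hstep : ∀ n, u (n + 1) = H (u n) := by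
    intro n; simp only [hu, Function.iterate_succ_apply']
  have hbounds : ∀ n, t ≤ u n ∧ u n < c := by
    intro n
    induction n with
    | zero => exact ⟨le_refl t, htc⟩
    | succ n ih =>
      have h1 : u n < H (u n) := key (u n) ih.1 ih.2
      have h2 : H (u n) < c := hcfix ▸ hm ih.2
      exact ⟨(hstep n) ▸ le_of_lt (lt_of_le_of_lt ih.1 h1), (hstep n) ▸ h2⟩
  have humono : Monotone u := by
    apply monotone_nat_of_le_succ
    intro n
    rw [hstep n]
    exact (key (u n) (hbounds n).1 (hbounds n).2).le
  have hubdd : BddAbove (Set.range u) := ⟨c, by rintro _ ⟨n, rfl⟩; exact (hbounds n).2.le⟩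
  set L := iSup u with hL
  have hulim : Filter.Tendsto u Filter.atTop (nhds L) := tendsto_atTop_ciSup humono hubdd
  have hLfix : H L = L := by
    have h1 : Filter.Tendsto (fun n => H (u n)) Filter.atTop (nhds (H L)) :=
      (Hcont.tendsto L).comp hulim
    have h2 : Filter.Tendsto (fun n => u (n + 1)) Filter.atTop (nhds L) :=
      hulim.comp (Filter.tendsto_add_atTop_nat 1)
    have h3 : (fun n => u (n + 1)) = fun n => H (u n) := funext hstep
    exact tendsto_nhds_unique h1 (h3 ▸ h2)
  have hLc : L = c := by
    have h1 : L ≤ c := ciSup_le fun n => (hbounds n).2.le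
    have h2 : t ≤ L := le_trans (hbounds 0).1 (le_ciSup hubdd 0)
    exact le_antisymm h1 (hc ▸ csInf_le hSbdd ⟨hLfix, h2⟩)
  -- distances: d(e.symm (u n), e.symm c) is constant
  have hfixc : h (e.symm c) = e.symm c := by
    apply e.injective
    have h1 : e (h (e.symm c)) = c := hcfix
    rw [h1, Homeomorph.apply_symm_apply]
  have hconst : ∀ n, dist (e.symm (u n)) (e.symm c) = dist (e.symm t) (e.symm c) := by
    intro n
    induction n with
    | zero => simp [hu]
    | succ n ih =>
      have hd := h.isometry.dist_eq (e.symm (u n)) (e.symm c)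
      rw [hfixc] at hd
      have h1 : e.symm (H (u n)) = h (e.symm (u n)) := by
        simp [hH]
      rw [hstep n, ← ih, h1]
      exact hd
  have hdist0 : Filter.Tendsto (fun n => dist (e.symm (u n)) (e.symm c)) Filter.atTop
      (nhds (dist (e.symm c) (e.symm c))) := by
    have h1 : Filter.Tendsto (fun n => e.symm (u n)) Filter.atTop (nhds (e.symm c)) :=
      (e.symm.continuous.tendsto c).comp (hLc ▸ hulim)
    exact h1.dist tendsto_const_nhds
  have hzero : dist (e.symm t) (e.symm c) = 0 := by
    have h2 : Filter.Tendsto (fun _ : ℕ => dist (e.symm t) (e.symm c)) Filter.atTop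
        (nhds (dist (e.symm c) (e.symm c))) := by
      rw [show (fun _ : ℕ => dist (e.symm t) (e.symm c)) = fun n => dist (e.symm (u n)) (e.symm c)
        from funext fun n => (hconst n).symm]
      exact hdist0
    have h3 := tendsto_nhds_unique h2 tendsto_const_nhds
    rw [dist_self] at h3
    exact h3.symm
  have heq : e.symm t = e.symm c := dist_eq_zero.mp hzero
  exact htcne (e.symm.injective heq)

/-- An orientation-preserving isometry with a fixed point (read through `e`) is the identity. -/
private lemma fix_id {X : Type*} [MetricSpace X] (e : X ≃ₜ ℝ) (h : X ≃ᵢ X)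
    (hm : StrictMono (fun s : ℝ => e (h (e.symm s)))) (a : ℝ)
    (ha : e (h (e.symm a)) = a) : ∀ t : ℝ, e (h (e.symm t)) = t := by
  intro t
  by_contra hne
  have hGm : StrictMono (fun s : ℝ => e (h.symm (e.symm s))) := conj_inv_mono e h hm
  have hGa : e (h.symm (e.symm a)) = a := by
    conv_lhs => rw [← ha]
    simp
  have hta : t ≠ a := by
    rintro rfl; exact hne ha
  have hGH : e (h.symm (e.symm (e (h (e.symm t))))) = t := by simp
  -- the negated homeomorphism
  set e' : X ≃ₜ ℝ := e.trans (Homeomorph.neg ℝ) with he'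
  have he'app : ∀ x : X, e' x = -(e x) := fun x => rfl
  have he'symm : ∀ s : ℝ, e'.symm s = e.symm (-s) := fun s => rfl
  rcases lt_trichotomy t (e (h (e.symm t))) with hlt | heqq | hgt
  · rcases lt_or_gt_of_ne hta with h1 | h1
    · exact core_lemma e h hm a t ha h1 hlt
    · -- t > a, t < H t : use e', h.symm
      have hm' : StrictMono (fun s : ℝ => e' (h.symm (e'.symm s))) := by
        intro s1 s2 h12
        simp only [he'app, he'symm, neg_lt_neg_iff]
        exact hGm (neg_lt_neg h12)
      have ha' : e' (h.symm (e'.symm (-a))) = -a := by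
        simp only [he'app, he'symm, neg_neg]
        rw [hGa]
      have hGt : e (h.symm (e.symm t)) < t := by
        have h3 : e (h.symm (e.symm t)) < e (h.symm (e.symm (e (h (e.symm t))))) := hGm hlt
        rwa [hGH] at h3
      have ht' : -t < e' (h.symm (e'.symm (-t))) := by
        simp only [he'app, he'symm, neg_neg]
        linarith
      exact core_lemma e' h.symm hm' (-a) (-t) ha' (by linarith) ht'
  · exact hne heqq.symm
  · -- H t < t, so t < G t
    have hGt : t < e (h.symm (e.symm t)) := by
      have h3 : e (h.symm (e.symm (e (h (e.symm t))))) < e (h.symm (e.symm t)) := hGm hgt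
      rwa [hGH] at h3
    rcases lt_or_gt_of_ne hta with h1 | h1
    · exact core_lemma e h.symm hGm a t hGa h1 hGt
    · -- t > a, H t < t : use e', h
      have hm' : StrictMono (fun s : ℝ => e' (h (e'.symm s))) := by
        intro s1 s2 h12
        simp only [he'app, he'symm, neg_lt_neg_iff]
        exact hm (neg_lt_neg h12)
      have ha' : e' (h (e'.symm (-a))) = -a := by
        simp only [he'app, he'symm, neg_neg]
        rw [ha]
      have ht' : -t < e' (h (e'.symm (-t))) := by
        simp only [he'app, he'symm, neg_neg]
        exact neg_lt_neg hgt
      exact core_lemma e' h hm' (-a) (-t) ha' (by linarith) ht'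

/-- Let `(X,d)` be a metric space homeomorphic to `ℝ` whose isometry group acts
transitively. Then for any `p, q ∈ X` there is a unique orientation-preserving isometry
`g` of `X` with `g p = q` (orientation-preserving: increasing when read through the
homeomorphism with `ℝ`). -/
theorem exists_unique_orientation_preserving_isometry
    {X : Type*} [MetricSpace X] (e : X ≃ₜ ℝ)
    (htrans : ∀ x y : X, ∃ f : X ≃ᵢ X, f x = y) :
    ∀ p q : X, ∃! g : X ≃ᵢ X,
      StrictMono (fun t : ℝ => e (g (e.symm t))) ∧ g p = q := by
  -- conjugates of isometries are strictly monotone or strictly antitone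
  have conj_dichotomy : ∀ f : X ≃ᵢ X, StrictMono (fun s : ℝ => e (f (e.symm s))) ∨
      StrictAnti (fun s : ℝ => e (f (e.symm s))) := by
    intro f
    apply Continuous.strictMono_of_inj
    · exact e.continuous.comp (f.continuous.comp e.symm.continuous)
    · intro s1 s2 h12
      exact e.symm.injective (f.injective (e.injective h12))
  -- existence of an orientation-preserving isometry sending p to q
  have exist_mono : ∀ p q : X, ∃ g : X ≃ᵢ X,
      StrictMono (fun s : ℝ => e (g (e.symm s))) ∧ g p = q := by
    intro p q
    obtain ⟨f, hf⟩ := htrans p q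
    rcases conj_dichotomy f with hmono | hanti
    · exact ⟨f, hmono, hf⟩
    · -- F is strictly antitone; find a fixed point of F
      set F : ℝ → ℝ := fun s => e (f (e.symm s)) with hF
      have Fcont : Continuous F := e.continuous.comp (f.continuous.comp e.symm.continuous)
      have hzex : ∃ z : ℝ, F z = z := by
        rcases lt_trichotomy (F 0) 0 with h1 | h1 | h1
        · -- F 0 < 0 : F (F 0) > F 0, sign change on [F 0, 0]
          have h2 : F 0 < F (F 0) := hanti h1
          have hcont : ContinuousOn (fun x => F x - x) (Set.Icc (F 0) 0) :=
            (Fcont.sub continuous_id).continuousOn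
          have h0 : (0 : ℝ) ∈ Set.Icc (F 0 - 0) (F (F 0) - F 0) := ⟨by linarith, by linarith⟩
          obtain ⟨x, _, hx0⟩ := intermediate_value_Icc' h1.le hcont h0
          have hx0' : F x - x = 0 := hx0
          exact ⟨x, by linarith⟩
        · exact ⟨0, h1⟩
        · have h2 : F (F 0) < F 0 := hanti h1
          have hcont : ContinuousOn (fun x => F x - x) (Set.Icc 0 (F 0)) :=
            (Fcont.sub continuous_id).continuousOn
          have h0 : (0 : ℝ) ∈ Set.Icc (F (F 0) - F 0) (F 0 - 0) := ⟨by linarith, by linarith⟩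
          obtain ⟨x, _, hx0⟩ := intermediate_value_Icc' h1.le hcont h0
          have hx0' : F x - x = 0 := hx0
          exact ⟨x, by linarith⟩
      obtain ⟨z, hz⟩ := hzex
      set x₀ : X := e.symm z with hx₀
      have hfx₀ : f x₀ = x₀ := by
        apply e.injective
        have h1 : e (f (e.symm z)) = z := hz
        rw [hx₀, h1, Homeomorph.apply_symm_apply]
      obtain ⟨j, hj⟩ := htrans x₀ p
      -- k = j ∘ f ∘ j⁻¹ is an anti isometry fixing p
      set k : X ≃ᵢ X := (j.symm.trans f).trans j with hk
      have hkapp : ∀ x, k x = j (f (j.symm x)) := fun x => rfl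
      have hkp : k p = p := by
        rw [hkapp, ← hj]
        simp [hfx₀]
      have hKcomp : ∀ s : ℝ, e (k (e.symm s)) =
          e (j (e.symm (F (e (j.symm (e.symm s)))))) := by
        intro s
        simp [hkapp, hF]
      have hKanti : StrictAnti (fun s : ℝ => e (k (e.symm s))) := by
        intro s1 s2 h12
        simp only
        rw [hKcomp s1, hKcomp s2]
        rcases conj_dichotomy j with hJm | hJa
        · exact hJm (hanti ((conj_inv_mono e j hJm) h12))
        · exact hJa (hanti ((conj_inv_anti e j hJa) h12))
      -- g = f ∘ k
      refine ⟨k.trans f, ?_, ?_⟩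
      · intro s1 s2 h12
        have h3 : e (f (e.symm (e (k (e.symm s1))))) < e (f (e.symm (e (k (e.symm s2))))) :=
          hanti (hKanti h12)
        simpa [IsometryEquiv.trans_apply] using h3
      · show f (k p) = q
        rw [hkp, hf]
  intro p q
  obtain ⟨g, hgm, hgp⟩ := exist_mono p q
  refine ⟨g, ⟨hgm, hgp⟩, ?_⟩
  rintro y ⟨hym, hyp⟩
  set h : X ≃ᵢ X := y.trans g.symm with hh
  have happ : ∀ x, h x = g.symm (y x) := fun x => rfl
  have hp : h p = p := by rw [happ, hyp, ← hgp]; simp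
  have hGim : StrictMono (fun s : ℝ => e (g.symm (e.symm s))) := conj_inv_mono e g hgm
  have hhm : StrictMono (fun s : ℝ => e (h (e.symm s))) := by
    intro s1 s2 h12
    have h3 : e (g.symm (e.symm (e (y (e.symm s1))))) < e (g.symm (e.symm (e (y (e.symm s2))))) :=
      hGim (hym h12)
    simpa [happ] using h3
  have hpfix : e (h (e.symm (e p))) = e p := by rw [Homeomorph.symm_apply_apply, hp]
  have hid : ∀ t : ℝ, e (h (e.symm t)) = t := fix_id e h hhm (e p) hpfix
  -- conclude y = g
  ext x
  have h4 := hid (e x)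
  rw [Homeomorph.symm_apply_apply] at h4
  have hx : h x = x := e.injective h4
  rw [happ] at hx
  calc y x = g (g.symm (y x)) := by simp
    _ = g x := by rw [hx]
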